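/- Let V be a steplike potential with steps V₊, V₋ and threshold x_M, let z ∈ ℂ, and let r₊, r₋ ∈ ℂ satisfy r₊² = z − V₊, r₋² = z − V₋, and r₋ ≠ 0. Suppose v₁ and v₂ are solutions of −u'' + V u = z u, and there are constants T₁, R₁, T₂, R₂ ∈ ℂ with: v₁(x) = e^{i r₋ x} + R₁ e^{−i r₋ x} for all x ≤ −x_M and v₁(x) = T₁ e^{i r₊ x} for all x ≥ x_M; v₂(x) = e^{−i r₋ x} + R₂ e^{i r₋ x} for all x ≤ −x_M and v₂(x) = T₂ e^{i r₊ x} for all x ≥ x_M. Then R₁ R₂ = 1 and T₂ = T₁ R₂. -/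

import Mathlib

open Complex MeasureTheory
open scoped Classical

/-- `u` is a solution of `-u'' + V u = z u`: `u` is differentiable with continuous
derivative, and the derivative satisfies the integrated form of the ODE. -/
def IsSolution (V : ℝ → ℝ) (z : ℂ) (u : ℝ → ℂ) : Prop :=
  Differentiable ℝ u ∧ Continuous (deriv u) ∧
    ∀ x : ℝ, deriv u x = deriv u 0 + ∫ t in (0:ℝ)..x, ((V t : ℂ) - z) * u t

/-- Grönwall-type lemma: a continuous nonnegative function dominated by `K` times its
own integral vanishes. -/
lemma gronwall_zero {g : ℝ → ℝ} (hg : Continuous g) (hg0 : ∀ x, 0 ≤ g x)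
    {a b K : ℝ}
    (hle : ∀ x ∈ Set.Icc a b, g x ≤ K * ∫ t in a..x, g t) :
    ∀ x ∈ Set.Icc a b, g x = 0 := by
  set h : ℝ → ℝ := fun x => ∫ t in a..x, g t with hh
  have hderiv : ∀ x : ℝ, HasDerivAt h (g x) x := fun x =>
    intervalIntegral.integral_hasDerivAt_right (hg.intervalIntegrable _ _)
      (hg.stronglyMeasurableAtFilter _ _) hg.continuousAt
  have hnn : ∀ x ∈ Set.Icc a b, 0 ≤ h x := fun x hx =>
    intervalIntegral.integral_nonneg hx.1 fun t _ => hg0 t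
  have key : ∀ x ∈ Set.Icc a b, ‖h x‖ ≤ gronwallBound 0 K 0 (x - a) := by
    apply norm_le_gronwallBound_of_norm_deriv_right_le
      (fun x _ => (hderiv x).continuousAt.continuousWithinAt)
      (fun x _ => (hderiv x).hasDerivWithinAt)
    · simp [hh]
    · intro x hx
      have hx' : x ∈ Set.Icc a b := ⟨hx.1, hx.2.le⟩
      rw [Real.norm_of_nonneg (hg0 x), Real.norm_of_nonneg (hnn x hx')]
      simpa using hle x hx'
  intro x hx
  have h0 : h x = 0 := by
    have := key x hx
    rw [gronwallBound_ε0_δ0, Real.norm_of_nonneg (hnn x hx)] at this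
    exact le_antisymm this (hnn x hx)
  have h0' : (∫ t in a..x, g t) = 0 := h0
  have := hle x hx
  rw [h0', mul_zero] at this
  exact le_antisymm this (hg0 x)

/-- Mirrored Grönwall lemma. -/
lemma gronwall_zero' {g : ℝ → ℝ} (hg : Continuous g) (hg0 : ∀ x, 0 ≤ g x)
    {a b K : ℝ}
    (hle : ∀ x ∈ Set.Icc a b, g x ≤ K * ∫ t in x..b, g t) :
    ∀ x ∈ Set.Icc a b, g x = 0 := by
  have main : ∀ y ∈ Set.Icc a b, g (a + b - y) = 0 := by
    apply gronwall_zero (g := fun y => g (a + b - y))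
      (hg.comp (by continuity)) (fun y => hg0 _)
    intro y hy
    have hxy : a + b - y ∈ Set.Icc a b := by
      constructor <;> [linarith [hy.2]; linarith [hy.1]]
    have := hle (a + b - y) hxy
    rwa [show (∫ t in a..y, g (a + b - t)) = ∫ t in (a+b-y)..(a+b-a), g t from
      intervalIntegral.integral_comp_sub_left g (a + b), show a + b - a = b by ring]
  intro x hx
  have hx' : a + b - x ∈ Set.Icc a b := by
    constructor <;> [linarith [hx.2]; linarith [hx.1]]
  have := main (a + b - x) hx'
  simpa using this

lemma Fint {V : ℝ → ℝ} (hVmeas : Measurable V) {C : ℝ} (hVbdd : ∀ x, |V x| ≤ C)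
    {z : ℂ} {u : ℝ → ℂ} (hu : Continuous u) (p q : ℝ) :
    IntervalIntegrable (fun t => ((V t : ℂ) - z) * u t) volume p q := by
  have hmeas : Measurable fun t => ((V t : ℂ) - z) * u t :=
    ((Complex.measurable_ofReal.comp hVmeas).sub measurable_const).mul hu.measurable
  apply IntervalIntegrable.mono_fun' (g := fun t => (C + ‖z‖) * ‖u t‖)
    ((continuous_const.mul hu.norm).intervalIntegrable p q)
    hmeas.aestronglyMeasurable.restrict
  filter_upwards with t
  have h1 : ‖((V t : ℂ) - z) * u t‖ ≤ (C + ‖z‖) * ‖u t‖ := by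
    rw [norm_mul]
    apply mul_le_mul_of_nonneg_right _ (norm_nonneg _)
    calc ‖(V t : ℂ) - z‖ ≤ ‖(V t : ℂ)‖ + ‖z‖ := norm_sub_le _ _
      _ ≤ C + ‖z‖ := by
        rw [Complex.norm_real, Real.norm_eq_abs]; exact add_le_add_left (hVbdd t) _
  simpa using h1

/-- Backward uniqueness: a solution vanishing on `[a, ∞)` vanishes everywhere. -/
lemma vanish_left {V : ℝ → ℝ} (hVmeas : Measurable V) {C : ℝ} (hVbdd : ∀ x, |V x| ≤ C)
    {z : ℂ} {w : ℝ → ℂ} (hw : IsSolution V z w) {a : ℝ}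
    (h0 : ∀ x, a ≤ x → w x = 0) : ∀ x, w x = 0 := by
  obtain ⟨hw1, hw2, hw3⟩ := hw
  have hcw : Continuous w := hw1.continuous
  set F : ℝ → ℂ := fun t => ((V t : ℂ) - z) * w t with hF
  have hFint : ∀ p q : ℝ, IntervalIntegrable F volume p q :=
    fun p q => Fint hVmeas hVbdd hcw p q
  set a' : ℝ := a + 1 with ha'
  have hweq : ∀ᶠ y in nhds a', w y = 0 := by
    filter_upwards [Ioi_mem_nhds (show a < a' by simp [ha'])] with y hy
    exact h0 y (le_of_lt hy)
  have hda' : deriv w a' = 0 := by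
    have : deriv w a' = deriv (fun _ : ℝ => (0 : ℂ)) a' :=
      Filter.EventuallyEq.deriv_eq hweq
    simpa using this
  have hwa' : w a' = 0 := h0 a' (by simp [ha'])
  have hderiv_eq : ∀ x : ℝ, deriv w x = ∫ t in a'..x, F t := by
    intro x
    have h1 := hw3 x
    have h2 := hw3 a'
    have hsplit : (∫ t in (0:ℝ)..x, F t) - ∫ t in (0:ℝ)..a', F t = ∫ t in a'..x, F t :=
      intervalIntegral.integral_interval_sub_left (hFint 0 x) (hFint 0 a')
    have : deriv w x - deriv w a' = ∫ t in a'..x, F t := by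
      rw [h1, h2, ← hsplit]; ring
    rwa [hda', sub_zero] at this
  set g : ℝ → ℝ := fun t => ‖w t‖ + ‖deriv w t‖ with hg
  have hgc : Continuous g := hcw.norm.add hw2.norm
  have hg0 : ∀ t, 0 ≤ g t := fun t => add_nonneg (norm_nonneg _) (norm_nonneg _)
  have hC0 : 0 ≤ C := le_trans (abs_nonneg _) (hVbdd 0)
  set K : ℝ := 1 + (C + ‖z‖) with hK
  intro x₀
  rcases le_or_gt a' x₀ with hx₀ | hx₀
  · exact h0 x₀ (by linarith [ha' ▸ hx₀])
  have key : ∀ x ∈ Set.Icc x₀ a', g x ≤ K * ∫ t in x..a', g t := by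
    intro x hx
    have hxa : x ≤ a' := hx.2
    -- bound ‖w x‖
    have hwint : ∫ t in x..a', deriv w t = w a' - w x := by
      apply intervalIntegral.integral_deriv_eq_sub
        (fun t _ => hw1 t) (hw2.intervalIntegrable _ _)
    have hw_bound : ‖w x‖ ≤ ∫ t in x..a', g t := by
      have h1 : ‖w x‖ = ‖∫ t in x..a', deriv w t‖ := by
        rw [hwint, hwa', zero_sub, norm_neg]
      rw [h1]
      calc ‖∫ t in x..a', deriv w t‖ ≤ ∫ t in x..a', ‖deriv w t‖ :=
            intervalIntegral.norm_integral_le_integral_norm hxa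
        _ ≤ ∫ t in x..a', g t := by
            apply intervalIntegral.integral_mono_on hxa
              (hw2.norm.intervalIntegrable _ _) (hgc.intervalIntegrable _ _)
            intro t _
            exact le_add_of_nonneg_left (norm_nonneg _)
    have hdw_bound : ‖deriv w x‖ ≤ (C + ‖z‖) * ∫ t in x..a', g t := by
      have h1 : ‖deriv w x‖ = ‖∫ t in x..a', F t‖ := by
        rw [hderiv_eq x, intervalIntegral.integral_symm, norm_neg]
      rw [h1]
      calc ‖∫ t in x..a', F t‖ ≤ ∫ t in x..a', ‖F t‖ :=
            intervalIntegral.norm_integral_le_integral_norm hxa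
        _ ≤ ∫ t in x..a', (C + ‖z‖) * g t := by
            apply intervalIntegral.integral_mono_on hxa
              ((hFint x a').norm) ((continuous_const.mul hgc).intervalIntegrable _ _)
            intro t _
            calc ‖F t‖ ≤ (C + ‖z‖) * ‖w t‖ := by
                  rw [hF, norm_mul]
                  apply mul_le_mul_of_nonneg_right _ (norm_nonneg _)
                  calc ‖(V t : ℂ) - z‖ ≤ ‖(V t : ℂ)‖ + ‖z‖ := norm_sub_le _ _
                    _ ≤ C + ‖z‖ := by
                      rw [Complex.norm_real, Real.norm_eq_abs]
                      exact add_le_add_left (hVbdd t) _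
              _ ≤ (C + ‖z‖) * g t := by
                  apply mul_le_mul_of_nonneg_left _ (by positivity)
                  exact le_add_of_nonneg_right (norm_nonneg _)
        _ = (C + ‖z‖) * ∫ t in x..a', g t := by
            rw [intervalIntegral.integral_const_mul]
    have hint_nn : 0 ≤ ∫ t in x..a', g t :=
      intervalIntegral.integral_nonneg hxa fun t _ => hg0 t
    calc g x = ‖w x‖ + ‖deriv w x‖ := rfl
      _ ≤ (∫ t in x..a', g t) + (C + ‖z‖) * ∫ t in x..a', g t := add_le_add hw_bound hdw_bound
      _ = K * ∫ t in x..a', g t := by rw [hK]; ring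
  have := gronwall_zero' hgc hg0 key x₀ ⟨le_refl _, hx₀.le⟩
  have hnw : ‖w x₀‖ = 0 := by
    have h1 : ‖w x₀‖ ≤ g x₀ := le_add_of_nonneg_right (norm_nonneg _)
    rw [this] at h1
    exact le_antisymm h1 (norm_nonneg _)
  exact norm_eq_zero.mp hnw

/-- Linear combinations of solutions are solutions. -/
lemma isSolution_comb {V : ℝ → ℝ} (hVmeas : Measurable V) {C : ℝ} (hVbdd : ∀ x, |V x| ≤ C)
    {z : ℂ} {u v : ℝ → ℂ} (hu : IsSolution V z u) (hv : IsSolution V z v) (c d : ℂ) :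
    IsSolution V z (fun x => c * u x + d * v x) := by
  obtain ⟨hu1, hu2, hu3⟩ := hu
  obtain ⟨hv1, hv2, hv3⟩ := hv
  have hd : ∀ x : ℝ, HasDerivAt (fun y => c * u y + d * v y)
      (c * deriv u x + d * deriv v x) x := fun x =>
    ((hu1 x).hasDerivAt.const_mul c).add ((hv1 x).hasDerivAt.const_mul d)
  have hdiff : Differentiable ℝ fun x => c * u x + d * v x := fun x => (hd x).differentiableAt
  have hderiv : deriv (fun y => c * u y + d * v y) =
      fun x => c * deriv u x + d * deriv v x := funext fun x => (hd x).deriv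
  refine ⟨hdiff, ?_, ?_⟩
  · rw [hderiv]; exact (continuous_const.mul hu2).add (continuous_const.mul hv2)
  · intro x
    rw [hderiv]
    simp only
    rw [hu3 x, hv3 x]
    have h1 : (∫ t in (0:ℝ)..x, ((V t : ℂ) - z) * (c * u t + d * v t)) =
        (∫ t in (0:ℝ)..x, c * (((V t : ℂ) - z) * u t) + d * (((V t : ℂ) - z) * v t)) := by
      congr 1; funext t; ring
    rw [h1, intervalIntegral.integral_add
        (((Fint hVmeas hVbdd hu1.continuous 0 x)).const_mul c)
        (((Fint hVmeas hVbdd hv1.continuous 0 x)).const_mul d),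
      intervalIntegral.integral_const_mul, intervalIntegral.integral_const_mul]
    ring

/-- For nonzero `c`, there is `t > 0` with `exp (c t) ≠ 1`. -/
lemma exp_ne_one (c : ℂ) (hc : c ≠ 0) : ∃ t : ℝ, 0 < t ∧ Complex.exp (c * t) ≠ 1 := by
  have hc' : (0:ℝ) < ‖c‖ := norm_pos_iff.mpr hc
  refine ⟨Real.pi / ‖c‖, div_pos Real.pi_pos hc', ?_⟩
  intro h
  rw [Complex.exp_eq_one_iff] at h
  obtain ⟨n, hn⟩ := h
  have hnorm : ‖c * ((Real.pi / ‖c‖ : ℝ) : ℂ)‖ = Real.pi := by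
    rw [norm_mul, Complex.norm_real, Real.norm_eq_abs,
      abs_of_pos (div_pos Real.pi_pos hc'), mul_comm, div_mul_cancel₀ _ hc'.ne']
  rw [hn] at hnorm
  rw [norm_mul, norm_mul, norm_mul, Complex.norm_intCast, Complex.norm_I, mul_one,
    Complex.norm_ofNat, Complex.norm_real, Real.norm_eq_abs, abs_of_pos Real.pi_pos] at hnorm
  rcases eq_or_ne n 0 with h0 | h0
  · rw [h0] at hnorm; simp at hnorm; linarith [Real.pi_pos, hnorm]
  · have h1 : (1:ℝ) ≤ |(n:ℝ)| := by
      rw [← Int.cast_abs]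
      exact_mod_cast Int.one_le_abs (by simpa using h0)
    nlinarith [Real.pi_pos]

theorem reflection_product_relation_right
    (V : ℝ → ℝ) (Vp Vm xM : ℝ)
    (hVmeas : Measurable V) (hVbdd : ∃ C : ℝ, ∀ x : ℝ, |V x| ≤ C)
    (hxM : 0 < xM)
    (hVp : ∀ x : ℝ, xM < x → V x = Vp)
    (hVm : ∀ x : ℝ, x < -xM → V x = Vm)
    (z rp rm : ℂ) (hrp : rp ^ 2 = z - (Vp : ℂ)) (hrm : rm ^ 2 = z - (Vm : ℂ))
    (hrm0 : rm ≠ 0)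
    (v₁ v₂ : ℝ → ℂ) (hv₁ : IsSolution V z v₁) (hv₂ : IsSolution V z v₂)
    (T₁ R₁ T₂ R₂ : ℂ)
    (hv₁L : ∀ x : ℝ, x ≤ -xM →
      v₁ x = Complex.exp (Complex.I * rm * x) + R₁ * Complex.exp (-(Complex.I * rm * x)))
    (hv₁R : ∀ x : ℝ, xM ≤ x → v₁ x = T₁ * Complex.exp (Complex.I * rp * x))
    (hv₂L : ∀ x : ℝ, x ≤ -xM →
      v₂ x = Complex.exp (-(Complex.I * rm * x)) + R₂ * Complex.exp (Complex.I * rm * x))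
    (hv₂R : ∀ x : ℝ, xM ≤ x → v₂ x = T₂ * Complex.exp (Complex.I * rp * x)) :
    R₁ * R₂ = 1 ∧ T₂ = T₁ * R₂ := by
  obtain ⟨C, hC⟩ := hVbdd
  -- choose t with exp (2 I rm t) ≠ 1
  have h2irm : (2 : ℂ) * Complex.I * rm ≠ 0 := by
    simp [Complex.I_ne_zero, hrm0]
  obtain ⟨t, ht0, htne⟩ := exp_ne_one _ h2irm
  set x₂ : ℝ := -xM - t with hx₂
  have hx₁le : (-xM : ℝ) ≤ -xM := le_refl _
  have hx₂le : x₂ ≤ -xM := by simp [hx₂]; linarith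
  -- key exp facts
  have hexp2 : ∀ x : ℝ, Complex.exp (Complex.I * rm * x) * Complex.exp (Complex.I * rm * x)
      = Complex.exp (2 * Complex.I * rm * x) := by
    intro x; rw [← Complex.exp_add]; ring_nf
  have hEne : Complex.exp (2 * Complex.I * rm * (-xM : ℝ)) ≠
      Complex.exp (2 * Complex.I * rm * (x₂ : ℝ)) := by
    intro h
    apply htne
    have key : Complex.exp (2 * Complex.I * rm * (x₂ : ℝ)) * Complex.exp (2 * Complex.I * rm * t)
        = Complex.exp (2 * Complex.I * rm * (x₂ : ℝ)) * 1 := by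
      rw [mul_one, ← Complex.exp_add, ← h]
      congr 1
      push_cast [hx₂]
      ring
    exact mul_left_cancel₀ (Complex.exp_ne_zero _) key
  -- Case T₁ = 0
  rcases eq_or_ne T₁ 0 with hT₁ | hT₁
  · exfalso
    have hv₁0 : ∀ x : ℝ, v₁ x = 0 := by
      apply vanish_left hVmeas hC hv₁ (a := xM)
      intro x hx
      rw [hv₁R x hx, hT₁, zero_mul]
    have hid : ∀ x : ℝ, x ≤ -xM →
        Complex.exp (2 * Complex.I * rm * x) = -R₁ := by
      intro x hx
      have h := (hv₁L x hx).symm.trans (hv₁0 x)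
      have hinv' : Complex.exp (Complex.I * rm * ↑x) * Complex.exp (-(Complex.I * rm * ↑x)) = 1 := by
        rw [← Complex.exp_add, add_neg_cancel, Complex.exp_zero]
      linear_combination Complex.exp (Complex.I * rm * ↑x) * h - hexp2 x - R₁ * hinv'
    have e1 := hid (-xM) hx₁le
    have e2 := hid x₂ hx₂le
    exact hEne (e1.trans e2.symm)
  · -- main case: w := T₁ v₂ - T₂ v₁ vanishes on the right
    set w : ℝ → ℂ := fun x => T₁ * v₂ x + (-T₂) * v₁ x with hw
    have hwsol : IsSolution V z w := isSolution_comb hVmeas hC hv₂ hv₁ T₁ (-T₂)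
    have hw0 : ∀ x : ℝ, w x = 0 := by
      apply vanish_left hVmeas hC hwsol (a := xM)
      intro x hx
      rw [hw]
      simp only
      rw [hv₂R x hx, hv₁R x hx]
      ring
    -- left-ray identity
    have hid : ∀ x : ℝ, x ≤ -xM →
        (T₁ * R₂ - T₂) * Complex.exp (2 * Complex.I * rm * x) = T₂ * R₁ - T₁ := by
      intro x hx
      have h := hw0 x
      rw [hw] at h
      simp only at h
      rw [hv₂L x hx, hv₁L x hx] at h
      have hinv' : Complex.exp (Complex.I * rm * ↑x) * Complex.exp (-(Complex.I * rm * ↑x)) = 1 := by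
        rw [← Complex.exp_add, add_neg_cancel, Complex.exp_zero]
      linear_combination Complex.exp (Complex.I * rm * ↑x) * h +
        (T₂ - T₁ * R₂) * hexp2 x + (T₂ * R₁ - T₁) * hinv'
    have e1 := hid (-xM) hx₁le
    have e2 := hid x₂ hx₂le
    have hcoef : T₁ * R₂ - T₂ = 0 := by
      by_contra hne
      apply hEne
      have := e1.trans e2.symm
      exact mul_left_cancel₀ hne this
    have hT2 : T₂ = T₁ * R₂ := by linear_combination -hcoef
    have hrhs : T₂ * R₁ - T₁ = 0 := by
      rw [← e1, hcoef, zero_mul]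
    have hR : R₁ * R₂ = 1 := by
      have : T₁ * (R₁ * R₂ - 1) = 0 := by linear_combination hrhs + R₁ * hcoef
      rcases mul_eq_zero.mp this with h | h
      · exact absurd h hT₁
      · linear_combination h
    exact ⟨hR, hT2⟩
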